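/- Let T : H → H be nonexpansive with Fix T nonempty and let x_{k+1} := α_k v + (1 − α_k) T(x_k) with α_k ∈ (0,1), α_k → 0, Σ α_k = +∞. If in addition |α_{k+1} − α_k|/α_{k+1} → 0 as k → +∞, then ‖x_k − T(x_k)‖ → 0 and x_k converges strongly to P_{Fix T}(v). -/

import Mathlib

open Filter Topology InnerProductSpace

lemma mono_IT {H : Type*} [NormedAddCommGroup H] [InnerProductSpace ℝ H]
    (T : H → H) (hT : ∀ x y : H, ‖T x - T y‖ ≤ ‖x - y‖) (a b : H) :
    0 ≤ ⟪(a - T a) - (b - T b), a - b⟫_ℝ := by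
  have e : (a - T a) - (b - T b) = (a - b) - (T a - T b) := by abel
  rw [e, inner_sub_left, real_inner_self_eq_norm_mul_norm]
  have h1 : ⟪T a - T b, a - b⟫_ℝ ≤ ‖T a - T b‖ * ‖a - b‖ := real_inner_le_norm _ _
  have h2 : ‖T a - T b‖ * ‖a - b‖ ≤ ‖a - b‖ * ‖a - b‖ :=
    mul_le_mul_of_nonneg_right (hT a b) (norm_nonneg _)
  linarith

lemma fix_aux {H : Type*} [NormedAddCommGroup H] [InnerProductSpace ℝ H]
    (n : ℕ) (zn v w : H) (h : zn = (1/((n:ℝ)+2)) • v + (1 - 1/((n:ℝ)+2)) • w) :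
    zn - w = (1/((n:ℝ)+1) : ℝ) • (v - zn) := by
  rw [h]
  have hn2 : ((n:ℝ)+2) ≠ 0 := by positivity
  have hn1 : ((n:ℝ)+1) ≠ 0 := by positivity
  match_scalars
  · field_simp; ring
  · field_simp; ring

lemma browder {H : Type*} [NormedAddCommGroup H] [InnerProductSpace ℝ H] [CompleteSpace H]
    (T : H → H) (hT : ∀ x y : H, ‖T x - T y‖ ≤ ‖x - y‖)
    (p : H) (hp : T p = p) (v : H) :
    ∃ ξ : H, T ξ = ξ ∧ (∀ w : H, T w = w → ‖v - ξ‖ ≤ ‖v - w‖) ∧ ‖ξ - p‖ ≤ ‖v - p‖ ∧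
    ∀ ε > 0, ∃ z : H, ∃ τ : ℝ, 0 < τ ∧ z - T z = τ • (v - z) ∧ ‖z - ξ‖ ≤ ε ∧
      ‖z - p‖ ≤ ‖v - p‖ := by
  have : Nonempty H := ⟨v⟩
  -- existence of the approximating curve
  have hexz : ∀ n : ℕ, ∃ z : H,
      z = (1/((n:ℝ)+2)) • v + (1 - 1/((n:ℝ)+2)) • T z := by
    intro n
    set c : ℝ := 1/((n:ℝ)+2) with hc
    have hc0 : (0:ℝ) < c := by positivity
    have hc1 : c < 1 := by
      rw [hc, div_lt_one (by positivity)]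
      have : (0:ℝ) ≤ (n:ℝ) := Nat.cast_nonneg n
      linarith
    set f : H → H := fun z => c • v + (1 - c) • T z with hf
    have hlip : LipschitzWith (Real.toNNReal (1 - c)) f := by
      apply LipschitzWith.of_dist_le_mul
      intro a b
      have e : f a - f b = (1 - c) • (T a - T b) := by
        simp only [hf]; module
      rw [dist_eq_norm, dist_eq_norm, e, norm_smul]
      rw [Real.norm_eq_abs, abs_of_nonneg (by linarith)]
      rw [Real.coe_toNNReal _ (by linarith)]
      exact mul_le_mul_of_nonneg_left (hT a b) (by linarith)
    have hcontr : ContractingWith (Real.toNNReal (1 - c)) f := by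
      constructor
      · rw [← Real.toNNReal_one]
        exact (Real.toNNReal_lt_toNNReal_iff one_pos).2 (by linarith)
      · exact hlip
    exact ⟨ContractingWith.fixedPoint f hcontr,
      (ContractingWith.fixedPoint_isFixedPt hcontr).symm⟩
  choose z hz using hexz
  set τ : ℕ → ℝ := fun n => 1/((n:ℝ)+1) with hτdef
  have hτpos : ∀ n, 0 < τ n := fun n => by positivity
  -- key identity
  have hzT : ∀ n, z n - T (z n) = τ n • (v - z n) := by
    intro n
    exact fix_aux n (z n) v (T (z n)) (hz n)
  -- bound
  have hzb : ∀ n, ‖z n - p‖ ≤ ‖v - p‖ := by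
    intro n
    set c : ℝ := 1/((n:ℝ)+2) with hc
    have hc0 : (0:ℝ) < c := by positivity
    have hc1 : c < 1 := by
      rw [hc, div_lt_one (by positivity)]
      have : (0:ℝ) ≤ (n:ℝ) := Nat.cast_nonneg n
      linarith
    have e : z n - p = c • (v - p) + (1 - c) • (T (z n) - p) := by
      nth_rewrite 1 [hz n]; module
    have h1 : ‖z n - p‖ ≤ c * ‖v - p‖ + (1 - c) * ‖T (z n) - p‖ := by
      rw [e]
      calc ‖c • (v - p) + (1 - c) • (T (z n) - p)‖
          ≤ ‖c • (v - p)‖ + ‖(1 - c) • (T (z n) - p)‖ := norm_add_le _ _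
        _ = c * ‖v - p‖ + (1 - c) * ‖T (z n) - p‖ := by
            rw [norm_smul, norm_smul, Real.norm_eq_abs, Real.norm_eq_abs,
              abs_of_nonneg (le_of_lt hc0), abs_of_nonneg (by linarith)]
    have h2 : ‖T (z n) - p‖ ≤ ‖z n - p‖ := by
      nth_rewrite 1 [← hp]; exact hT _ _
    nlinarith
  set g : ℕ → ℝ := fun n => ‖v - z n‖^2 with hg
  -- key Cauchy estimate
  have hkey : ∀ n m : ℕ, n ≤ m → ‖z n - z m‖^2 ≤ g m - g n ∧ g n ≤ g m := by
    intro n m hnm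
    rcases eq_or_lt_of_le hnm with rfl | hlt
    · simp
    have hm0 := mono_IT T hT (z n) (z m)
    rw [hzT n, hzT m] at hm0
    have hze : z n - z m = (v - z m) - (v - z n) := by abel
    rw [hze] at hm0 ⊢
    set a := v - z n with ha
    set b := v - z m with hb
    have hab : ⟪a, b⟫_ℝ = ⟪b, a⟫_ℝ := real_inner_comm b a
    have haa : ⟪a, a⟫_ℝ = ‖a‖^2 := real_inner_self_eq_norm_sq a
    have hbb : ⟪b, b⟫_ℝ = ‖b‖^2 := real_inner_self_eq_norm_sq b
    simp only [inner_sub_left, inner_sub_right, real_inner_smul_left, hab, haa, hbb] at hm0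
    have hnrm : ‖b - a‖^2 = ‖b‖^2 - 2*⟪b, a⟫_ℝ + ‖a‖^2 := norm_sub_sq_real b a
    have hτn : 0 < τ n := hτpos n
    have hτm : 0 < τ m := hτpos m
    have hτlt : τ m < τ n := by
      rw [hτdef]
      apply div_lt_div_of_pos_left one_pos (by positivity)
      exact_mod_cast by omega
    have hga : g n = ‖a‖^2 := by rw [hg]
    have hgb : g m = ‖b‖^2 := by rw [hg]
    have h1 : (τ n + τ m) * ‖b - a‖^2 ≤ (τ n - τ m) * (g m - g n) := by
      rw [hga, hgb, hnrm]; linarith [hm0]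
    have h9 : 0 ≤ (τ n - τ m) * (g m - g n) :=
      le_trans (mul_nonneg (by linarith) (sq_nonneg _)) h1
    have hgle : g n ≤ g m := by nlinarith [h9, hτlt]
    refine ⟨?_, hgle⟩
    have h10 : (τ n - τ m) * (g m - g n) ≤ (τ n + τ m) * (g m - g n) :=
      mul_le_mul_of_nonneg_right (by linarith) (by linarith)
    exact le_of_mul_le_mul_left (le_trans h1 h10) (by linarith)
  -- bound on ‖v - z n‖
  have hvz : ∀ n, ‖v - z n‖ ≤ 2 * ‖v - p‖ := by
    intro n
    have h1 : ‖v - z n‖ ≤ ‖v - p‖ + ‖p - z n‖ := norm_sub_le_norm_sub_add_norm_sub v p (z n)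
    have h2 : ‖p - z n‖ = ‖z n - p‖ := norm_sub_rev _ _
    have := hzb n
    linarith
  have hub : ∀ n, g n ≤ (2 * ‖v - p‖)^2 := fun n =>
    pow_le_pow_left₀ (norm_nonneg _) (hvz n) 2
  have hgmono : Monotone g := fun n m hnm => (hkey n m hnm).2
  have hgbdd : BddAbove (Set.range g) := ⟨(2*‖v - p‖)^2, by rintro _ ⟨n, rfl⟩; exact hub n⟩
  have hgconv : Tendsto g atTop (nhds (⨆ n, g n)) := tendsto_atTop_ciSup hgmono hgbdd
  have hgcauchy : CauchySeq g := hgconv.cauchySeq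
  have hzc : CauchySeq z := by
    rw [Metric.cauchySeq_iff]
    intro ε hε
    obtain ⟨N, hN⟩ := Metric.cauchySeq_iff.1 hgcauchy (ε^2) (by positivity)
    refine ⟨N, fun m hm n hn => ?_⟩
    have key : ∀ a b : ℕ, a ≤ b → N ≤ a → N ≤ b → ‖z a - z b‖ < ε := by
      intro a b hab ha hb
      have h1 := (hkey a b hab).1
      have h2 : g b - g a < ε^2 := by
        have := hN b hb a ha
        rw [Real.dist_eq] at this
        calc g b - g a ≤ |g b - g a| := le_abs_self _
          _ < ε^2 := this
      nlinarith [norm_nonneg (z a - z b), hε]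
    rcases le_total m n with h | h
    · rw [dist_eq_norm]; exact key m n h hm hn
    · rw [dist_eq_norm, norm_sub_rev]; exact key n m h hn hm
  obtain ⟨ξ, hξ⟩ := cauchySeq_tendsto_of_complete hzc
  have hTcont : Continuous T := by
    have : LipschitzWith 1 T := by
      apply LipschitzWith.of_dist_le_mul
      intro a b
      rw [dist_eq_norm, dist_eq_norm]
      simpa using hT a b
    exact this.continuous
  have hτ0 : Tendsto τ atTop (nhds 0) := tendsto_one_div_add_atTop_nhds_zero_nat
  have hd0 : Tendsto (fun n => z n - T (z n)) atTop (nhds 0) := by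
    refine squeeze_zero_norm (a := fun n => τ n * (2 * ‖v - p‖)) ?_ ?_
    · intro n
      rw [hzT n, norm_smul, Real.norm_eq_abs, abs_of_pos (hτpos n)]
      exact mul_le_mul_of_nonneg_left (hvz n) (le_of_lt (hτpos n))
    · have := hτ0.mul_const (2 * ‖v - p‖)
      rw [zero_mul] at this
      exact this
  have hfixξ : T ξ = ξ := by
    have h1 : Tendsto (fun n => z n - T (z n)) atTop (nhds (ξ - T ξ)) :=
      hξ.sub ((hTcont.tendsto ξ).comp hξ)
    have h2 : ξ - T ξ = 0 := tendsto_nhds_unique h1 hd0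
    have := sub_eq_zero.1 h2
    exact this.symm
  have hξp : ‖ξ - p‖ ≤ ‖v - p‖ := by
    have h1 : Tendsto (fun n => ‖z n - p‖) atTop (nhds ‖ξ - p‖) :=
      ((hξ.sub tendsto_const_nhds).norm)
    exact le_of_tendsto h1 (Eventually.of_forall hzb)
  have hvar : ∀ w : H, T w = w → 0 ≤ ⟪v - ξ, ξ - w⟫_ℝ := by
    intro w hw
    have h1 : ∀ n, 0 ≤ ⟪v - z n, z n - w⟫_ℝ := by
      intro n
      have h2 := mono_IT T hT (z n) w
      rw [hzT n, hw, sub_self, sub_zero, real_inner_smul_left] at h2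
      nlinarith [hτpos n]
    have h3 : Tendsto (fun n => ⟪v - z n, z n - w⟫_ℝ) atTop (nhds ⟪v - ξ, ξ - w⟫_ℝ) :=
      (tendsto_const_nhds.sub hξ).inner (hξ.sub tendsto_const_nhds)
    exact ge_of_tendsto h3 (Eventually.of_forall h1)
  refine ⟨ξ, hfixξ, ?_, hξp, ?_⟩
  · intro w hw
    have h1 := hvar w hw
    have h2 : ‖v - w‖^2 = ‖v - ξ‖^2 + 2*⟪v - ξ, ξ - w⟫_ℝ + ‖ξ - w‖^2 := by
      rw [show v - w = (v - ξ) + (ξ - w) by abel, norm_add_sq_real]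
    nlinarith [norm_nonneg (v - w), norm_nonneg (v - ξ), sq_nonneg ‖ξ - w‖]
  · intro ε hε
    obtain ⟨N, hN⟩ := Metric.tendsto_atTop.1 hξ ε hε
    have := hN N le_rfl
    rw [dist_eq_norm] at this
    exact ⟨z N, τ N, hτpos N, hzT N, le_of_lt this, hzb N⟩

lemma xu_lemma (α s β : ℕ → ℝ) (hα : ∀ k, α k ∈ Set.Ioo (0:ℝ) 1)
    (hαs : ¬ Summable α) (hs0 : ∀ k, 0 ≤ s k)
    (hrec : ∀ k, s (k+1) ≤ (1 - α k) * s k + α k * β k)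
    (hβ : ∀ ε > 0, ∀ᶠ k in atTop, β k ≤ ε) :
    Tendsto s atTop (nhds 0) := by
  rw [Metric.tendsto_atTop]
  intro ε hε
  obtain ⟨K, hK⟩ := eventually_atTop.1 (hβ (ε/2) (by linarith))
  set P : ℕ → ℝ := fun m => ∏ j ∈ Finset.range m, (1 - α (K + j)) with hP
  have hPpos : ∀ m, 0 < P m := by
    intro m
    apply Finset.prod_pos
    intro j _
    have := (hα (K + j)).2
    linarith
  have key : ∀ m, s (K + m) - ε/2 ≤ P m * (s K - ε/2) := by
    intro m
    induction m with
    | zero => simp [hP]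
    | succ m ih =>
      have h1 := hrec (K + m)
      have h2 := hK (K + m) (by omega)
      have hαm := hα (K + m)
      have h3 : s (K + m + 1) - ε/2 ≤ (1 - α (K + m)) * (s (K + m) - ε/2) := by
        have : α (K + m) * β (K + m) ≤ α (K + m) * (ε/2) :=
          mul_le_mul_of_nonneg_left h2 (le_of_lt hαm.1)
        nlinarith [hαm.1, hαm.2]
      have h4 : (1 - α (K + m)) * (s (K + m) - ε/2) ≤ (1 - α (K + m)) * (P m * (s K - ε/2)) :=
        mul_le_mul_of_nonneg_left ih (by linarith [hαm.2])
      have h5 : P (m + 1) = (1 - α (K + m)) * P m := by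
        rw [hP]; simp [Finset.prod_range_succ]; ring
      have h6 : (K + (m+1)) = (K + m + 1) := by omega
      rw [h6, h5]
      calc s (K + m + 1) - ε/2 ≤ (1 - α (K + m)) * (P m * (s K - ε/2)) := le_trans h3 h4
        _ = (1 - α (K + m)) * P m * (s K - ε/2) := by ring
  -- P m → 0
  have hsum : Tendsto (fun m => ∑ j ∈ Finset.range m, α (K + j)) atTop atTop := by
    have hns : ¬ Summable (fun j => α (K + j)) := by
      intro h
      apply hαs
      have : Summable (fun n => α (n + K)) := by
        apply h.congr
        intro n
        simp [Nat.add_comm]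
      exact (summable_nat_add_iff K).1 this
    exact (not_summable_iff_tendsto_nat_atTop_of_nonneg
      (fun n => le_of_lt (hα (K + n)).1)).1 hns
  have hP0 : Tendsto P atTop (nhds 0) := by
    have hub : ∀ m, P m ≤ Real.exp (-(∑ j ∈ Finset.range m, α (K + j))) := by
      intro m
      rw [show -∑ j ∈ Finset.range m, α (K + j) = ∑ j ∈ Finset.range m, -(α (K + j)) by
        rw [Finset.sum_neg_distrib], Real.exp_sum]
      apply Finset.prod_le_prod
      · intro j _; linarith [(hα (K + j)).2]
      · intro j _
        have := Real.add_one_le_exp (-(α (K + j)))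
        linarith
    have hexp : Tendsto (fun m => Real.exp (-(∑ j ∈ Finset.range m, α (K + j))))
        atTop (nhds 0) :=
      Real.tendsto_exp_atBot.comp (tendsto_neg_atBot_iff.2 hsum)
    exact squeeze_zero (fun m => le_of_lt (hPpos m)) hub hexp
  have hP1 : Tendsto (fun m => P m * |s K - ε/2|) atTop (nhds 0) := by
    simpa using hP0.mul_const |s K - ε/2|
  obtain ⟨N, hN⟩ := eventually_atTop.1 (hP1.eventually_lt_const (show (0:ℝ) < ε/2 by linarith))
  refine ⟨K + N, fun k hk => ?_⟩
  have hkK : K ≤ k := by omega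
  obtain ⟨m, rfl⟩ := Nat.exists_eq_add_of_le hkK
  have hmN : N ≤ m := by omega
  have h1 := key m
  have h2 : P m * (s K - ε/2) ≤ P m * |s K - ε/2| :=
    mul_le_mul_of_nonneg_left (le_abs_self _) (le_of_lt (hPpos m))
  have h3 := hN m hmN
  have : s (K + m) < ε := by linarith
  rw [Real.dist_eq]
  rw [abs_of_nonneg (by linarith [hs0 (K + m)] : s (K + m) - 0 ≥ 0)]
  linarith

lemma sq_ineq {H : Type*} [NormedAddCommGroup H] [InnerProductSpace ℝ H] (y w : H) :
    ‖y + w‖^2 ≤ ‖w‖^2 + 2*⟪y, y + w⟫_ℝ := by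
  have h1 : ‖y + w‖^2 = ‖y‖^2 + 2*⟪y, w⟫_ℝ + ‖w‖^2 := norm_add_sq_real y w
  have h2 : ⟪y, y + w⟫_ℝ = ⟪y, y⟫_ℝ + ⟪y, w⟫_ℝ := inner_add_right y y w
  have h3 : ⟪y, y⟫_ℝ = ‖y‖^2 := real_inner_self_eq_norm_sq y
  nlinarith [sq_nonneg ‖y‖]

theorem stmt8 {H : Type*} [NormedAddCommGroup H] [InnerProductSpace ℝ H] [CompleteSpace H]
    (T : H → H) (hT : ∀ x y : H, ‖T x - T y‖ ≤ ‖x - y‖)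
    (hfix : (Function.fixedPoints T).Nonempty)
    (v : H) (α : ℕ → ℝ) (hα : ∀ k, α k ∈ Set.Ioo (0:ℝ) 1)
    (hα0 : Tendsto α atTop (nhds 0)) (hαs : ¬ Summable α)
    (hαq : Tendsto (fun k => |α (k+1) - α k| / α (k+1)) atTop (nhds 0))
    (x : ℕ → H) (hx : ∀ k, x (k+1) = α k • v + (1 - α k) • T (x k)) :
    Tendsto (fun k => ‖x k - T (x k)‖) atTop (nhds 0) ∧
    ∃ ξ ∈ Function.fixedPoints T,
      (∀ w ∈ Function.fixedPoints T, ‖v - ξ‖ ≤ ‖v - w‖) ∧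
      Tendsto x atTop (nhds ξ) := by
  obtain ⟨p, hp'⟩ := hfix
  have hp : T p = p := hp'
  obtain ⟨ξ, hξfix, hξmin, hξp, hξapprox⟩ := browder T hT p hp v
  set M : ℝ := max ‖x 0 - p‖ ‖v - p‖ with hM
  have hM0 : 0 ≤ M := le_trans (norm_nonneg _) (le_max_left _ _)
  have hxb : ∀ k, ‖x k - p‖ ≤ M := by
    intro k
    induction k with
    | zero => exact le_max_left _ _
    | succ k ih =>
      have hαk := hα k
      have e : x (k+1) - p = α k • (v - p) + (1 - α k) • (T (x k) - p) := by
        rw [hx k]; module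
      have h2 : ‖T (x k) - p‖ ≤ ‖x k - p‖ := by nth_rewrite 1 [← hp]; exact hT _ _
      have h3 : ‖x (k+1) - p‖ ≤ α k * ‖v - p‖ + (1 - α k) * ‖T (x k) - p‖ := by
        rw [e]
        calc _ ≤ ‖α k • (v - p)‖ + ‖(1 - α k) • (T (x k) - p)‖ := norm_add_le _ _
          _ = α k * ‖v - p‖ + (1 - α k) * ‖T (x k) - p‖ := by
            rw [norm_smul, norm_smul, Real.norm_eq_abs, Real.norm_eq_abs,
              abs_of_pos hαk.1, abs_of_nonneg (by linarith [hαk.2])]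
      have h4 : ‖v - p‖ ≤ M := le_max_right _ _
      nlinarith [hαk.1, hαk.2]
  set C : ℝ := ‖v - p‖ + M with hC
  have hC0 : 0 ≤ C := add_nonneg (norm_nonneg _) hM0
  have hvT : ∀ k, ‖v - T (x k)‖ ≤ C := by
    intro k
    have h1 : ‖v - T (x k)‖ ≤ ‖v - p‖ + ‖p - T (x k)‖ :=
      norm_sub_le_norm_sub_add_norm_sub _ _ _
    have h2 : ‖p - T (x k)‖ = ‖T (x k) - p‖ := norm_sub_rev _ _
    have h3 : ‖T (x k) - p‖ ≤ ‖x k - p‖ := by nth_rewrite 1 [← hp]; exact hT _ _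
    have := hxb k
    rw [hC]; linarith
  -- successive differences tend to 0
  set s : ℕ → ℝ := fun k => ‖x (k+1) - x k‖ with hsdef
  set β : ℕ → ℝ := fun k => C * (|α (k+1) - α k| / α (k+1)) with hβdef
  have hs0 : Tendsto s atTop (nhds 0) := by
    apply xu_lemma (fun k => α (k+1)) s β (fun k => hα (k+1))
    · intro h
      apply hαs
      have h2 : Summable (fun n => α (n + 1)) := h.congr (fun n => by rw [Nat.add_comm])
      exact (summable_nat_add_iff 1).1 h2
    · intro k; exact norm_nonneg _
    · intro k
      have hαk1 := hα (k+1)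
      have e : x (k+2) - x (k+1) =
          (α (k+1) - α k) • (v - T (x k)) + (1 - α (k+1)) • (T (x (k+1)) - T (x k)) := by
        rw [show x (k+2) = α (k+1) • v + (1 - α (k+1)) • T (x (k+1)) from hx (k+1), hx k]
        module
      have h1 : s (k+1) ≤ |α (k+1) - α k| * ‖v - T (x k)‖ + (1 - α (k+1)) * s k := by
        show ‖x (k+2) - x (k+1)‖ ≤ _
        rw [e]
        calc ‖(α (k+1) - α k) • (v - T (x k)) + (1 - α (k+1)) • (T (x (k+1)) - T (x k))‖
            ≤ ‖(α (k+1) - α k) • (v - T (x k))‖ + ‖(1 - α (k+1)) • (T (x (k+1)) - T (x k))‖ :=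
              norm_add_le _ _
          _ = |α (k+1) - α k| * ‖v - T (x k)‖ + (1 - α (k+1)) * ‖T (x (k+1)) - T (x k)‖ := by
              rw [norm_smul, norm_smul, Real.norm_eq_abs, Real.norm_eq_abs,
                abs_of_nonneg (show (0:ℝ) ≤ 1 - α (k+1) by linarith [hαk1.2])]
          _ ≤ |α (k+1) - α k| * ‖v - T (x k)‖ + (1 - α (k+1)) * s k := by
              have := hT (x (k+1)) (x k)
              have h5 : (0:ℝ) ≤ 1 - α (k+1) := by linarith [hαk1.2]
              exact add_le_add le_rfl (mul_le_mul_of_nonneg_left this h5)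
      have h6 : α (k+1) * β k = C * |α (k+1) - α k| := by
        have hne : α (k+1) ≠ 0 := ne_of_gt hαk1.1
        rw [hβdef]
        rw [mul_comm (α (k+1)) _, mul_assoc, div_mul_cancel₀ _ hne]
      have h7 : |α (k+1) - α k| * ‖v - T (x k)‖ ≤ |α (k+1) - α k| * C :=
        mul_le_mul_of_nonneg_left (hvT k) (abs_nonneg _)
      rw [h6]
      have h8 : C * |α (k+1) - α k| = |α (k+1) - α k| * C := by ring
      linarith [h1, h7]
    · intro ε hε
      have h1 : Tendsto β atTop (nhds 0) := by
        have := hαq.const_mul C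
        rw [mul_zero] at this
        exact this
      exact (h1.eventually_lt_const hε).mono (fun k hk => le_of_lt hk)
  -- fixed point residual tends to 0
  have hd0 : Tendsto (fun k => ‖x k - T (x k)‖) atTop (nhds 0) := by
    rw [← tendsto_add_atTop_iff_nat 1]
    have hbd : ∀ k, ‖x (k+1) - T (x (k+1))‖ ≤ s (k+1) + α (k+1) * C := by
      intro k
      have e2 : x (k+2) - T (x (k+1)) = α (k+1) • (v - T (x (k+1))) := by
        rw [show x (k+2) = α (k+1) • v + (1 - α (k+1)) • T (x (k+1)) from hx (k+1)]
        module
      have h1 : ‖x (k+1) - T (x (k+1))‖ ≤ ‖x (k+1) - x (k+2)‖ + ‖x (k+2) - T (x (k+1))‖ :=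
        norm_sub_le_norm_sub_add_norm_sub _ _ _
      have h2 : ‖x (k+1) - x (k+2)‖ = s (k+1) := norm_sub_rev _ _
      have h3 : ‖x (k+2) - T (x (k+1))‖ ≤ α (k+1) * C := by
        rw [e2, norm_smul, Real.norm_eq_abs, abs_of_pos (hα (k+1)).1]
        exact mul_le_mul_of_nonneg_left (hvT (k+1)) (le_of_lt (hα (k+1)).1)
      linarith
    apply squeeze_zero (fun k => norm_nonneg _) hbd
    have h4 : Tendsto (fun k => s (k+1)) atTop (nhds 0) :=
      hs0.comp (tendsto_add_atTop_nat 1)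
    have h5 : Tendsto (fun k => α (k+1) * C) atTop (nhds 0) := by
      have := (hα0.comp (tendsto_add_atTop_nat 1)).mul_const C
      rw [zero_mul] at this
      exact this
    have := h4.add h5
    rw [add_zero] at this
    exact this
  refine ⟨hd0, ξ, hξfix, fun w hw => hξmin w hw, ?_⟩
  -- limsup estimate
  have hlim : ∀ ε > 0, ∀ᶠ k in atTop, ⟪v - ξ, x k - ξ⟫_ℝ ≤ ε := by
    intro ε hε
    obtain ⟨B, hB⟩ : ∃ B : ℝ, B = M + ‖v - p‖ + 1 := ⟨_, rfl⟩
    have hBpos : 0 < B := by rw [hB]; positivity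
    have hBne : B ≠ 0 := ne_of_gt hBpos
    obtain ⟨z, τ, hτ, hzTz, hzξ, hzp⟩ := hξapprox (ε/(6*B)) (div_pos hε (by linarith))
    have hxz : ∀ k, ‖x k - z‖ ≤ B := by
      intro k
      have h1 : ‖x k - z‖ ≤ ‖x k - p‖ + ‖p - z‖ := norm_sub_le_norm_sub_add_norm_sub _ _ _
      have h2 : ‖p - z‖ = ‖z - p‖ := norm_sub_rev _ _
      have := hxb k
      rw [hB]; linarith [hzp]
    have hxξ : ∀ k, ‖x k - ξ‖ ≤ B := by
      intro k
      have h1 : ‖x k - ξ‖ ≤ ‖x k - p‖ + ‖p - ξ‖ := norm_sub_le_norm_sub_add_norm_sub _ _ _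
      have h2 : ‖p - ξ‖ = ‖ξ - p‖ := norm_sub_rev _ _
      have := hxb k
      rw [hB]; linarith [hξp]
    have hvz : ‖v - z‖ ≤ 2*B := by
      have h1 : ‖v - z‖ ≤ ‖v - p‖ + ‖p - z‖ := norm_sub_le_norm_sub_add_norm_sub _ _ _
      have h2 : ‖p - z‖ = ‖z - p‖ := norm_sub_rev _ _
      rw [hB]; linarith [hzp, hM0]
    have key1 : ∀ k, τ * ⟪v - z, x k - z⟫_ℝ ≤ ‖x k - T (x k)‖ * B := by
      intro k
      have h2 := mono_IT T hT (x k) z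
      rw [hzTz, inner_sub_left, real_inner_smul_left] at h2
      have h3 : ⟪x k - T (x k), x k - z⟫_ℝ ≤ ‖x k - T (x k)‖ * B := by
        calc ⟪x k - T (x k), x k - z⟫_ℝ ≤ ‖x k - T (x k)‖ * ‖x k - z‖ :=
            real_inner_le_norm _ _
          _ ≤ ‖x k - T (x k)‖ * B :=
            mul_le_mul_of_nonneg_left (hxz k) (norm_nonneg _)
      linarith
    have key2 : ∀ k, ⟪v - ξ, x k - ξ⟫_ℝ =
        ⟪v - z, x k - z⟫_ℝ + ⟪v - z, z - ξ⟫_ℝ + ⟪z - ξ, x k - ξ⟫_ℝ := by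
      intro k
      simp only [inner_sub_left, inner_sub_right]
      ring
    have hbd2 : |⟪v - z, z - ξ⟫_ℝ| ≤ ε/3 := by
      calc |⟪v - z, z - ξ⟫_ℝ| ≤ ‖v - z‖ * ‖z - ξ‖ := abs_real_inner_le_norm _ _
        _ ≤ (2*B) * (ε/(6*B)) := by
            apply mul_le_mul hvz hzξ (norm_nonneg _) (by positivity)
        _ = ε/3 := by field_simp; ring
    have hbd3 : ∀ k, |⟪z - ξ, x k - ξ⟫_ℝ| ≤ ε/6 := by
      intro k
      calc |⟪z - ξ, x k - ξ⟫_ℝ| ≤ ‖z - ξ‖ * ‖x k - ξ‖ := abs_real_inner_le_norm _ _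
        _ ≤ (ε/(6*B)) * B := by
            apply mul_le_mul hzξ (hxξ k) (norm_nonneg _) (by positivity)
        _ = ε/6 := by field_simp
    have hev : ∀ᶠ k in atTop, ‖x k - T (x k)‖ < ε * τ / (2 * B) :=
      hd0.eventually_lt_const (div_pos (mul_pos hε hτ) (by linarith))
    filter_upwards [hev] with k hk
    have h1 : τ * ⟪v - z, x k - z⟫_ℝ ≤ τ * (ε/2) := by
      have h2 : ‖x k - T (x k)‖ * B ≤ (ε * τ / (2 * B)) * B :=
        mul_le_mul_of_nonneg_right (le_of_lt hk) (le_of_lt hBpos)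
      have h3 : (ε * τ / (2 * B)) * B = τ * (ε/2) := by field_simp
      linarith [key1 k]
    have h4 : ⟪v - z, x k - z⟫_ℝ ≤ ε/2 := le_of_mul_le_mul_left h1 hτ
    have h5 := abs_le.1 hbd2
    have h6 := abs_le.1 (hbd3 k)
    rw [key2 k]
    linarith
  -- final Xu application
  set S : ℕ → ℝ := fun k => ‖x k - ξ‖^2 with hSdef
  set β' : ℕ → ℝ := fun k => 2 * ⟪v - ξ, x (k+1) - ξ⟫_ℝ with hβ'def
  have hStend : Tendsto S atTop (nhds 0) := by
    apply xu_lemma α S β' hα hαs (fun k => sq_nonneg _)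
    · intro k
      have hαk := hα k
      have e3 : x (k+1) - ξ = α k • (v - ξ) + (1 - α k) • (T (x k) - ξ) := by
        rw [hx k, ← hξfix]; module
      have h1 := sq_ineq (α k • (v - ξ)) ((1 - α k) • (T (x k) - ξ))
      rw [← e3] at h1
      have h2 : ‖(1 - α k) • (T (x k) - ξ)‖^2 = (1 - α k)^2 * ‖T (x k) - ξ‖^2 := by
        rw [norm_smul, Real.norm_eq_abs, abs_of_nonneg (by linarith [hαk.2]), mul_pow]
      have h3 : ⟪α k • (v - ξ), x (k+1) - ξ⟫_ℝ = α k * ⟪v - ξ, x (k+1) - ξ⟫_ℝ :=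
        real_inner_smul_left _ _ _
      have h4 : ‖T (x k) - ξ‖ ≤ ‖x k - ξ‖ := by nth_rewrite 1 [← hξfix]; exact hT _ _
      have h4' : ‖T (x k) - ξ‖^2 ≤ ‖x k - ξ‖^2 := by
        have := mul_le_mul h4 h4 (norm_nonneg _) ((norm_nonneg _).trans h4)
        nlinarith [this]
      have h5 : (1 - α k)^2 * ‖T (x k) - ξ‖^2 ≤ (1 - α k) * ‖x k - ξ‖^2 := by
        have e1 : (1 - α k)^2 ≤ 1 - α k := by nlinarith [hαk.1, hαk.2]
        calc (1 - α k)^2 * ‖T (x k) - ξ‖^2 ≤ (1 - α k) * ‖T (x k) - ξ‖^2 :=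
            mul_le_mul_of_nonneg_right e1 (sq_nonneg _)
          _ ≤ (1 - α k) * ‖x k - ξ‖^2 :=
            mul_le_mul_of_nonneg_left h4' (by linarith [hαk.2])
      show ‖x (k+1) - ξ‖^2 ≤ (1 - α k) * ‖x k - ξ‖^2 + α k * (2 * ⟪v - ξ, x (k+1) - ξ⟫_ℝ)
      rw [h2, h3] at h1
      linarith
    · intro ε hε
      obtain ⟨K, hK⟩ := eventually_atTop.1 (hlim (ε/2) (by linarith))
      rw [eventually_atTop]
      refine ⟨K, fun k hk => ?_⟩
      have := hK (k+1) (by omega)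
      show 2 * ⟪v - ξ, x (k+1) - ξ⟫_ℝ ≤ ε
      linarith
  have h1 : Tendsto (fun k => ‖x k - ξ‖) atTop (nhds 0) := by
    have h2 : Tendsto (fun k => Real.sqrt (S k)) atTop (nhds 0) := by
      have := (Real.continuous_sqrt.tendsto 0).comp hStend
      simpa [Function.comp_def] using this
    apply h2.congr
    intro k
    rw [hSdef]
    exact Real.sqrt_sq (norm_nonneg _)
  rw [tendsto_iff_dist_tendsto_zero]
  apply h1.congr
  intro k
  rw [dist_eq_norm]
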